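/- Let c > 0 and let b : ℝ → ℝ be locally bounded and measurable. Suppose there exists x₀ ≥ 3 such that b(x) ≤ (1/(2c))·log x + (1/c)·log(log x) for all x ≥ x₀. Define u(x) = ∫₀ˣ exp(−∫₀ʸ 2b(z) dz) dy. Then ∫_{x₀}^∞ exp(−∫₀ˣ 2b(y) dy) / (u(x) − u(x − c)) dx = ∞. -/

import Mathlib

open Real MeasureTheory intervalIntegral Set

/-- `2 * b` is interval integrable since `b` is measurable and locally bounded. -/
lemma two_b_intervalIntegrable (b : ℝ → ℝ) (hb_meas : Measurable b)
    (hb_loc : ∀ K : Set ℝ, IsCompact K → ∃ M, ∀ x ∈ K, |b x| ≤ M) (a a' : ℝ) :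
    IntervalIntegrable (fun z => 2 * b z) volume a a' := by
  obtain ⟨M, hM⟩ := hb_loc (Set.uIcc a a') isCompact_uIcc
  rw [intervalIntegrable_iff]
  have hfin : volume (Set.uIoc a a') < ⊤ := by
    rw [Set.uIoc]; exact measure_Ioc_lt_top
  refine (MeasureTheory.Integrable.mono' (g := fun _ : ℝ => 2 * M)
    (integrableOn_const hfin.ne)
    ((hb_meas.const_mul 2).aestronglyMeasurable.restrict) ?_)
  filter_upwards [ae_restrict_mem measurableSet_uIoc] with x hx
  have h := hM x (Set.uIoc_subset_uIcc hx)
  rw [Real.norm_eq_abs, abs_mul, abs_two]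
  have h2 : |(2:ℝ) * M| = 2 * M := by
    rw [abs_of_nonneg]; nlinarith [abs_nonneg (b x)]
  nlinarith [abs_nonneg (b x)]

/-- 1 < log 3. -/
lemma one_lt_log_three : 1 < Real.log 3 := by
  rw [Real.lt_log_iff_exp_lt (by norm_num : (0:ℝ) < 3)]
  exact Real.exp_one_lt_d9.trans_le (by norm_num)

/-- Divergence of `∫ 1/(c x log x)` at infinity. -/
lemma lintegral_one_div_mul_log_eq_top (c a : ℝ) (hc : 0 < c) (ha : 3 ≤ a) :
    ∫⁻ x in Set.Ici a, ENNReal.ofReal (1 / (c * x * Real.log x)) = ⊤ := by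
  apply ENNReal.eq_top_of_forall_nnreal_le
  intro r
  have hloglog : Filter.Tendsto (fun x : ℝ => Real.log (Real.log x))
      Filter.atTop Filter.atTop := Real.tendsto_log_atTop.comp Real.tendsto_log_atTop
  obtain ⟨N, hN1, hN2⟩ := ((hloglog.eventually_ge_atTop
      (Real.log (Real.log a) + c * r)).and (Filter.eventually_ge_atTop a)).exists
  have ha0 : (0:ℝ) < a := by linarith
  have hmem : ∀ x ∈ Set.Icc a N, (0:ℝ) < x ∧ 1 < Real.log x := by
    intro x hx
    have hx0 : (0:ℝ) < x := lt_of_lt_of_le ha0 hx.1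
    exact ⟨hx0, lt_of_lt_of_le one_lt_log_three
      (Real.log_le_log (by norm_num) (le_trans ha hx.1))⟩
  have hcont : ContinuousOn (fun x : ℝ => 1 / (c * x * Real.log x)) (Set.Icc a N) := by
    intro x hx
    obtain ⟨hx0, hlx⟩ := hmem x hx
    apply ContinuousWithinAt.div continuousWithinAt_const
    · exact ((continuousWithinAt_const.mul continuousWithinAt_id).mul
        ((Real.continuousAt_log hx0.ne').continuousWithinAt))
    · have : (0:ℝ) < c * x * Real.log x := by
        apply mul_pos (mul_pos hc hx0); linarith
      exact this.ne'
  have hii : IntervalIntegrable (fun x : ℝ => 1 / (c * x * Real.log x)) volume a N := by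
    apply ContinuousOn.intervalIntegrable
    rwa [Set.uIcc_of_le hN2]
  have hFTC : ∫ x in a..N, 1 / (c * x * Real.log x)
      = (1/c) * Real.log (Real.log N) - (1/c) * Real.log (Real.log a) := by
    refine intervalIntegral.integral_eq_sub_of_hasDerivAt
      (f := fun x => (1/c) * Real.log (Real.log x)) ?_ hii
    intro x hx
    rw [Set.uIcc_of_le hN2] at hx
    obtain ⟨hx0, hlx⟩ := hmem x hx
    have hlx0 : Real.log x ≠ 0 := by linarith
    have h1 : HasDerivAt Real.log x⁻¹ x := Real.hasDerivAt_log hx0.ne'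
    have h2 : HasDerivAt Real.log (Real.log x)⁻¹ (Real.log x) :=
      Real.hasDerivAt_log hlx0
    have h3 : HasDerivAt (fun x => Real.log (Real.log x))
        ((Real.log x)⁻¹ * x⁻¹) x := h2.comp x h1
    have h4 := h3.const_mul (1/c)
    refine h4.congr_deriv ?_
    simp only [one_div, mul_inv]
    ring
  have hr : (r : ℝ) ≤ ∫ x in a..N, 1 / (c * x * Real.log x) := by
    rw [hFTC, ← mul_sub]
    have h5 : c * r ≤ Real.log (Real.log N) - Real.log (Real.log a) := by linarith
    calc (r:ℝ) = (1/c) * (c * r) := by field_simp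
      _ ≤ (1/c) * (Real.log (Real.log N) - Real.log (Real.log a)) := by
          apply mul_le_mul_of_nonneg_left h5 (by positivity)
  calc (r : ENNReal) = ENNReal.ofReal r := ENNReal.ofReal_coe_nnreal.symm
    _ ≤ ENNReal.ofReal (∫ x in a..N, 1 / (c * x * Real.log x)) :=
        ENNReal.ofReal_le_ofReal hr
    _ = ENNReal.ofReal (∫ x in Set.Ioc a N, 1 / (c * x * Real.log x)) := by
        rw [intervalIntegral.integral_of_le hN2]
    _ = ∫⁻ x in Set.Ioc a N, ENNReal.ofReal (1 / (c * x * Real.log x)) := by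
        apply MeasureTheory.ofReal_integral_eq_lintegral_ofReal hii.1
        filter_upwards [ae_restrict_mem measurableSet_Ioc] with x hx
        obtain ⟨hx0, hlx⟩ := hmem x ⟨hx.1.le, hx.2⟩
        positivity
    _ ≤ ∫⁻ x in Set.Ici a, ENNReal.ofReal (1 / (c * x * Real.log x)) :=
        lintegral_mono_set (fun x hx => hx.1.le)

/-- Theorem 2(ii), analytic content: if `b(x) ≤ (1/(2c))·log x + (1/c)·log log x` for
all large `x`, then the down-crossing criterion integral diverges. -/
theorem criterion_infinite_of_small_drift
    (c : ℝ) (hc : 0 < c)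
    (b : ℝ → ℝ) (hb_meas : Measurable b)
    (hb_loc : ∀ K : Set ℝ, IsCompact K → ∃ M, ∀ x ∈ K, |b x| ≤ M)
    (x₀ : ℝ) (hx₀ : 3 ≤ x₀)
    (hb : ∀ x : ℝ, x₀ ≤ x →
      b x ≤ (1 / (2 * c)) * Real.log x + (1 / c) * Real.log (Real.log x))
    (u : ℝ → ℝ)
    (hu : ∀ x, u x = ∫ y in (0:ℝ)..x, Real.exp (-∫ z in (0:ℝ)..y, 2 * b z)) :
    ∫⁻ x in Ici x₀,
      ENNReal.ofReal
        (Real.exp (-∫ y in (0:ℝ)..x, 2 * b y) / (u x - u (x - c))) = ⊤ := by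
  have hint : ∀ a a', IntervalIntegrable (fun z => 2 * b z) volume a a' :=
    two_b_intervalIntegrable b hb_meas hb_loc
  set W : ℝ → ℝ := fun y => Real.exp (-∫ z in (0:ℝ)..y, 2 * b z) with hW
  have hWcont : Continuous W :=
    Real.continuous_exp.comp (intervalIntegral.continuous_primitive hint 0).neg
  have hWpos : ∀ y, 0 < W y := fun y => Real.exp_pos _
  -- key pointwise bound
  have key : ∀ x, x₀ + c ≤ x →
      1 / (c * x * Real.log x) ≤ W x / (u x - u (x - c)) := by
    intro x hx
    have hx3 : (3:ℝ) ≤ x - c := by linarith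
    have hxx : x₀ ≤ x - c := by linarith
    have hx0 : (0:ℝ) < x := by linarith
    have hlx : 1 < Real.log x :=
      lt_of_lt_of_le one_lt_log_three (Real.log_le_log (by norm_num) (by linarith))
    have hllx : 0 ≤ Real.log (Real.log x) := Real.log_nonneg hlx.le
    set B := (Real.log x + 2 * Real.log (Real.log x)) / c with hB
    have hBpos : 0 < B := div_pos (by linarith) hc
    -- bound on `2 b` on `[x-c, x]`
    have hbB : ∀ z ∈ Set.Icc (x - c) x, 2 * b z ≤ B := by
      intro z hz
      have hz0 : (0:ℝ) < z := by linarith [hz.1]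
      have h1 : Real.log z ≤ Real.log x := Real.log_le_log hz0 hz.2
      have hlz : 1 < Real.log z :=
        lt_of_lt_of_le one_lt_log_three (Real.log_le_log (by norm_num) (by linarith [hz.1]))
      have h2 : Real.log (Real.log z) ≤ Real.log (Real.log x) :=
        Real.log_le_log (by linarith) h1
      have h0 := hb z (hxx.trans hz.1)
      have c1 : (0:ℝ) ≤ 1/(2*c) := by positivity
      have c2 : (0:ℝ) ≤ 1/c := by positivity
      have h3 : b z ≤ (1/(2*c)) * Real.log x + (1/c) * Real.log (Real.log x) := by
        nlinarith [h1, h2]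
      have hBeq : B = 2 * ((1/(2*c)) * Real.log x + (1/c) * Real.log (Real.log x)) := by
        rw [hB]; field_simp
      rw [hBeq]; linarith
    -- comparison of `W` on `[x-c, x]`
    have hWle : ∀ y ∈ Set.Icc (x - c) x, W y ≤ W x * Real.exp ((x - y) * B) := by
      intro y hy
      rw [hW]
      simp only
      rw [← Real.exp_add, Real.exp_le_exp]
      have hsub : (∫ z in (0:ℝ)..x, 2 * b z) - (∫ z in (0:ℝ)..y, 2 * b z)
          = ∫ z in y..x, 2 * b z :=
        intervalIntegral.integral_interval_sub_left (hint 0 x) (hint 0 y)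
      have hmono : (∫ z in y..x, 2 * b z) ≤ (x - y) * B := by
        have h6 := intervalIntegral.integral_mono_on (g := fun _ => B) hy.2 (hint y x)
          intervalIntegrable_const
          (fun z hz => hbB z ⟨le_trans hy.1 hz.1, hz.2⟩)
        rw [intervalIntegral.integral_const, smul_eq_mul] at h6
        exact h6
      linarith
    have hxc : x - c < x := by linarith
    have hF : u x - u (x - c) = ∫ y in (x - c)..x, W y := by
      rw [hu x, hu (x - c)]
      exact intervalIntegral.integral_interval_sub_left
        (hWcont.intervalIntegrable 0 x) (hWcont.intervalIntegrable 0 (x - c))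
    have hFpos : 0 < ∫ y in (x - c)..x, W y :=
      intervalIntegral.intervalIntegral_pos_of_pos_on
        (hWcont.intervalIntegrable _ _) (fun y _ => hWpos y) hxc
    -- upper bound for the denominator
    have hcont3 : Continuous (fun y : ℝ => Real.exp ((x - y) * B)) := by fun_prop
    have hcont2 : Continuous (fun y : ℝ => W x * Real.exp ((x - y) * B)) :=
      continuous_const.mul hcont3
    have step1 : (∫ y in (x - c)..x, W y)
        ≤ ∫ y in (x - c)..x, W x * Real.exp ((x - y) * B) :=
      intervalIntegral.integral_mono_on hxc.le (hWcont.intervalIntegrable _ _)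
        (hcont2.intervalIntegrable _ _) hWle
    have step2 : (∫ y in (x - c)..x, W x * Real.exp ((x - y) * B))
        = W x * ((Real.exp (c * B) - 1) / B) := by
      rw [intervalIntegral.integral_const_mul]
      congr 1
      have hFTC : ∫ y in (x - c)..x, Real.exp ((x - y) * B)
          = -(Real.exp ((x - x) * B) / B)
            - -(Real.exp ((x - (x - c)) * B) / B) := by
        refine intervalIntegral.integral_eq_sub_of_hasDerivAt
          (f := fun y => -(Real.exp ((x - y) * B) / B))
          (f' := fun y => Real.exp ((x - y) * B)) ?_
          (hcont3.intervalIntegrable _ _)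
        intro y _
        have h1 : HasDerivAt (fun y : ℝ => (x - y) * B) (-B) y := by
          have := ((hasDerivAt_id y).const_sub x).mul_const B
          simpa using this
        have h4 := ((h1.exp).div_const B).neg
        convert h4 using 1
        show Real.exp ((x - y) * B) = -(Real.exp ((x - y) * B) * -B / B)
        rw [mul_neg, neg_div, neg_neg, mul_div_assoc, div_self hBpos.ne', mul_one]
        rfl
      rw [hFTC]
      simp only [sub_self, zero_mul, Real.exp_zero]
      have hcc : x - (x - c) = c := by ring
      rw [hcc, mul_comm c B]
      ring
    have hcB : Real.exp (B * c) = x * (Real.log x)^2 := by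
      have hbc : B * c = Real.log x + 2 * Real.log (Real.log x) := by
        rw [hB, div_mul_cancel₀ _ hc.ne']
      rw [hbc, Real.exp_add, Real.exp_log hx0,
        show (2:ℝ) * Real.log (Real.log x)
          = Real.log (Real.log x) + Real.log (Real.log x) by ring,
        Real.exp_add, Real.exp_log (by linarith : (0:ℝ) < Real.log x)]
      ring
    have step3 : (Real.exp (c * B) - 1) / B ≤ c * x * Real.log x := by
      rw [div_le_iff₀ hBpos, mul_comm c B, hcB]
      have hBc : c * x * Real.log x * B
          = x * Real.log x * (Real.log x + 2 * Real.log (Real.log x)) := by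
        rw [hB]; field_simp
      rw [hBc]
      nlinarith [mul_nonneg (mul_nonneg hx0.le (by linarith : (0:ℝ) ≤ Real.log x)) hllx]
    have hFle : (∫ y in (x - c)..x, W y) ≤ W x * (c * x * Real.log x) := by
      refine step1.trans ?_
      rw [step2]
      exact mul_le_mul_of_nonneg_left step3 (hWpos x).le
    have hD : (0:ℝ) < c * x * Real.log x := by
      apply mul_pos (mul_pos hc hx0); linarith
    rw [hF, div_le_div_iff₀ hD hFpos, one_mul]
    linarith
  -- assemble
  have hdiv := lintegral_one_div_mul_log_eq_top c (x₀ + c) hc (by linarith)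
  rw [eq_top_iff, ← hdiv]
  calc ∫⁻ x in Set.Ici (x₀ + c), ENNReal.ofReal (1 / (c * x * Real.log x))
      ≤ ∫⁻ x in Set.Ici (x₀ + c), ENNReal.ofReal (W x / (u x - u (x - c))) := by
        apply MeasureTheory.setLIntegral_mono' measurableSet_Ici
        intro x hx
        exact ENNReal.ofReal_le_ofReal (key x hx)
    _ ≤ ∫⁻ x in Set.Ici x₀, ENNReal.ofReal (W x / (u x - u (x - c))) :=
        lintegral_mono_set (Set.Ici_subset_Ici.mpr (by linarith))
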